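/- Let p ≥ 2 and fix k > 0. Let X, Y ∈ Sym⁺(p) and let ((U,D),(V,Λ)) ∈ 𝓔_X × 𝓔_Y attain d_SR(X,Y); let A be a minimal-Frobenius-norm antisymmetric matrix with exp(A) = V Uᵀ and L := log(D⁻¹Λ). Suppose there exists (V₁,Λ₁) ∈ 𝓔_Y with (V₁,Λ₁) ≠ (V,Λ) such that d((U,D),(V₁,Λ₁)) = d_SR(X,Y). Let A₁ be a minimal-Frobenius-norm antisymmetric matrix with exp(A₁) = V₁ Uᵀ and L₁ := log(D⁻¹Λ₁). Then the curve χ₁(t) := exp(A₁t) U D exp(L₁t) Uᵀ exp(A₁ᵀt) satisfies χ₁(0) = X, χ₁(1) = Y, and k·‖A₁‖_F²/2 + ‖L₁‖_F² = d_SR(X,Y)², and there exists t ∈ [0,1] such that χ₁(t) ≠ exp(At) U D exp(Lt) Uᵀ exp(Aᵀt). -/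

import Mathlib

open Matrix

/-- `p × p` real matrices. -/
abbrev Mat (p : ℕ) := Matrix (Fin p) (Fin p) ℝ

/-- `U ∈ SO(p)`: a rotation matrix. -/
def IsSO {p : ℕ} (U : Mat p) : Prop := U * Uᵀ = 1 ∧ U.det = 1

/-- `D ∈ Diag⁺(p)`: diagonal with positive diagonal entries. -/
def IsDiagPos {p : ℕ} (D : Mat p) : Prop := D.IsDiag ∧ ∀ i, 0 < D i i

/-- Antisymmetric matrix. -/
def IsAntisym {p : ℕ} (A : Mat p) : Prop := Aᵀ = -A

/-- The permutation matrix `P⁰_π`: in column `j`, the entry `π j` equals 1. -/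
def P0 {p : ℕ} (π : Equiv.Perm (Fin p)) : Mat p :=
  Matrix.of fun i j => if i = π j then (1 : ℝ) else 0

/-- `diag(−1,1,…,1)`. -/
def flipMat (p : ℕ) : Mat p :=
  Matrix.diagonal fun i => if (i : ℕ) = 0 then (-1 : ℝ) else 1

open scoped Classical in
/-- `P_π`: the determinant-one modification of `P⁰_π`. -/
noncomputable def Pmat {p : ℕ} (π : Equiv.Perm (Fin p)) : Mat p :=
  if (P0 π).det = 1 then P0 π else flipMat p * P0 π

/-- `D_π := P_π D P_πᵀ`. -/
noncomputable def permDiag {p : ℕ} (π : Equiv.Perm (Fin p)) (D : Mat p) : Mat p :=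
  Pmat π * D * (Pmat π)ᵀ

/-- The stabilizer group `G_D = {R ∈ SO(p) : R D Rᵀ = D}`. -/
def GD {p : ℕ} (D : Mat p) : Set (Mat p) := {R | IsSO R ∧ R * D * Rᵀ = D}

/-- Squared Frobenius norm. -/
noncomputable def frobSq {p : ℕ} (A : Mat p) : ℝ := ∑ i, ∑ j, (A i j) ^ 2

/-- `d_SO(U,V)²`: the minimal value of `‖A‖_F²/2` over antisymmetric `A` with `exp A = V Uᵀ`. -/
noncomputable def dSOsq {p : ℕ} (U V : Mat p) : ℝ :=
  sInf {x | ∃ A : Mat p, IsAntisym A ∧ NormedSpace.exp A = V * Uᵀ ∧ x = frobSq A / 2}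

/-- `d_𝒟(D,Λ)²`. -/
noncomputable def dDsq {p : ℕ} (D Λ : Mat p) : ℝ :=
  ∑ i, (Real.log (Λ i i) - Real.log (D i i)) ^ 2

/-- The geodesic distance on `SO(p) × Diag⁺(p)` (with weight `k`). -/
noncomputable def gdist {p : ℕ} (k : ℝ) (a b : Mat p × Mat p) : ℝ :=
  Real.sqrt (k * dSOsq a.1 b.1 + dDsq a.2 b.2)

/-- `𝓔_X`: the set of versions (eigen-decompositions) of `X`. -/
def Versions {p : ℕ} (X : Mat p) : Set (Mat p × Mat p) :=
  {a | IsSO a.1 ∧ IsDiagPos a.2 ∧ a.1 * a.2 * a.1ᵀ = X}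

/-- The scaling–rotation distance on `Sym⁺(p)`. -/
noncomputable def dSR {p : ℕ} (k : ℝ) (X Y : Mat p) : ℝ :=
  sInf {x | ∃ a ∈ Versions X, ∃ b ∈ Versions Y, x = gdist k a b}

namespace SRAux

open NormedSpace Set

attribute [local instance] Matrix.linftyOpNormedRing Matrix.linftyOpNormedAlgebra

variable {p : ℕ}

/-- Frobenius inner product. -/
noncomputable def fip (Xm Ym : Mat p) : ℝ := ∑ i, ∑ j, Xm i j * Ym i j

lemma frobSq_eq_fip (Xm : Mat p) : frobSq Xm = fip Xm Xm := by
  simp [frobSq, fip, sq]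

lemma fip_comm (Xm Ym : Mat p) : fip Xm Ym = fip Ym Xm := by
  simp [fip, mul_comm]

lemma fip_trace (Xm Ym : Mat p) : fip Xm Ym = Matrix.trace (Xmᵀ * Ym) := by
  simp only [Matrix.trace, Matrix.diag, Matrix.mul_apply, Matrix.transpose_apply, fip]
  rw [Finset.sum_comm]

lemma frobSq_nonneg (Xm : Mat p) : 0 ≤ frobSq Xm := by
  apply Finset.sum_nonneg; intro i _
  exact Finset.sum_nonneg fun j _ => sq_nonneg _

lemma frobSq_eq_zero {Xm : Mat p} (h : frobSq Xm = 0) : Xm = 0 := by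
  ext i j
  have h1 : ∀ i ∈ Finset.univ, (0:ℝ) ≤ ∑ j, (Xm i j)^2 :=
    fun i _ => Finset.sum_nonneg fun j _ => sq_nonneg _
  have h2 := (Finset.sum_eq_zero_iff_of_nonneg h1).mp h i (Finset.mem_univ i)
  have h3 := (Finset.sum_eq_zero_iff_of_nonneg
    (fun j _ => sq_nonneg (Xm i j))).mp h2 j (Finset.mem_univ j)
  simpa using sq_eq_zero_iff.mp h3

lemma frobSq_add_smul (Xm Ym : Mat p) (s : ℝ) :
    frobSq (Xm + s • Ym) = frobSq Xm + 2*s*(fip Xm Ym) + s^2 * frobSq Ym := by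
  have h : ∀ i j, ((Xm + s • Ym) i j)^2
      = (Xm i j)^2 + (2*s)*(Xm i j * Ym i j) + s^2 * (Ym i j)^2 := by
    intro i j; simp [Matrix.add_apply, Matrix.smul_apply, smul_eq_mul]; ring
  simp only [frobSq, fip, h, Finset.sum_add_distrib, ← Finset.mul_sum]

lemma antisym_smul {A : Mat p} (hA : IsAntisym A) (t : ℝ) : IsAntisym (t • A) := by
  unfold IsAntisym at *
  rw [Matrix.transpose_smul, hA, smul_neg]

lemma antisym_trace {A : Mat p} (hA : IsAntisym A) : Matrix.trace A = 0 := by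
  have h : ∀ i, A i i = 0 := by
    intro i
    have := congrFun (congrFun hA i) i
    simp only [Matrix.transpose_apply, Matrix.neg_apply] at this
    linarith
  simp [Matrix.trace, Matrix.diag, h]

lemma exp_mul_exp_neg (M : Mat p) : exp M * exp (-M) = 1 := by
  rw [← Matrix.exp_add_of_commute M (-M) (Commute.neg_right (Commute.refl M))]
  simp [exp_zero]

lemma exp_neg_mul_exp (M : Mat p) : exp (-M) * exp M = 1 := by
  rw [← Matrix.exp_add_of_commute (-M) M (Commute.neg_left (Commute.refl M))]
  simp [exp_zero]

lemma exp_smul_transpose {A : Mat p} (hA : IsAntisym A) (t : ℝ) :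
    exp (t • Aᵀ) = exp (-(t • A)) := by
  rw [hA, smul_neg]

lemma exp_orth {A : Mat p} (hA : IsAntisym A) (t : ℝ) :
    exp (t • A) * (exp (t • A))ᵀ = 1 := by
  rw [← Matrix.exp_transpose, antisym_smul hA t, exp_mul_exp_neg]

lemma exp_orth' {A : Mat p} (hA : IsAntisym A) (t : ℝ) :
    (exp (t • A))ᵀ * exp (t • A) = 1 := by
  rw [← Matrix.exp_transpose, antisym_smul hA t, exp_neg_mul_exp]

end SRAux

namespace SRAux2
open SRAux NormedSpace Set
attribute [local instance] Matrix.linftyOpNormedRing Matrix.linftyOpNormedAlgebra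
variable {p : ℕ}

lemma continuous_exp_smul (M : Mat p) : Continuous fun t : ℝ => exp (t • M) := by
  rw [continuous_iff_continuousAt]
  exact fun t => (hasDerivAt_exp_smul_const M t).continuousAt

lemma det_exp_sq (M : Mat p) (hM : IsAntisym M) (t : ℝ) : (exp (t • M)).det ^ 2 = 1 := by
  have h := congrArg Matrix.det (exp_orth hM t)
  rw [Matrix.det_mul, Matrix.det_transpose, Matrix.det_one] at h
  rw [sq]; exact h

lemma det_exp_antisym {M : Mat p} (hM : IsAntisym M) : (exp M).det = 1 := by
  have hc : Continuous fun t : ℝ => (exp (t • M)).det := (continuous_exp_smul M).matrix_det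
  have h0 : (exp ((0:ℝ) • M)).det = 1 := by
    rw [zero_smul, exp_zero, Matrix.det_one]
  by_contra hne
  have h1 : (exp ((1:ℝ) • M)).det = -1 := by
    have hsq := det_exp_sq M hM 1
    have : ((exp ((1:ℝ) • M)).det - 1) * ((exp ((1:ℝ) • M)).det + 1) = 0 := by nlinarith
    rcases mul_eq_zero.mp this with h | h
    · exfalso; apply hne; rw [← one_smul ℝ M]; linarith
    · linarith
  have hsub : (0:ℝ) ∈ Icc ((fun t : ℝ => (exp (t • M)).det) 1)
      ((fun t : ℝ => (exp (t • M)).det) 0) := by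
    simp only [h0, h1]; constructor <;> norm_num
  obtain ⟨t, _, ht⟩ := intermediate_value_Icc' (zero_le_one) hc.continuousOn hsub
  have hsq := det_exp_sq M hM t
  have ht' : (exp (t • M)).det = 0 := ht
  rw [ht'] at hsq; norm_num at hsq

lemma isSO_exp {M : Mat p} (hM : IsAntisym M) : IsSO (exp M) := by
  constructor
  · have := exp_orth hM 1; rwa [one_smul] at this
  · exact det_exp_antisym hM

lemma inv_unique {a x y : Mat p} (h1 : a * x = 1) (h2 : y * a = 1) : x = y := by
  rw [← one_mul x, ← h2, Matrix.mul_assoc, h1, Matrix.mul_one]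

lemma exp_neg_eq {U V A : Mat p} (hUtU : Uᵀ * U = 1) (hVVt : V * Vᵀ = 1)
    (hexp : exp A = V * Uᵀ) : exp (-A) = U * Vᵀ := by
  have h1 : exp A * (U * Vᵀ) = 1 := by
    rw [hexp, Matrix.mul_assoc, ← Matrix.mul_assoc Uᵀ U Vᵀ, hUtU, Matrix.one_mul, hVVt]
  exact (inv_unique h1 (exp_neg_mul_exp A)).symm

lemma diagPos_eq_diagonal {D : Mat p} (hD : IsDiagPos D) :
    D = Matrix.diagonal (fun i => D i i) := (hD.1.diagonal_diag).symm

lemma D_mul_exp_L {D Λ L : Mat p} (hD : IsDiagPos D) (hΛ : IsDiagPos Λ)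
    (hL : L = Matrix.diagonal fun i => Real.log ((D i i)⁻¹ * Λ i i)) :
    D * exp L = Λ := by
  rw [hL, Matrix.exp_diagonal]
  nth_rewrite 1 [diagPos_eq_diagonal hD]
  rw [Matrix.diagonal_mul_diagonal]
  conv_rhs => rw [diagPos_eq_diagonal hΛ]
  refine congrArg Matrix.diagonal (funext fun i => ?_)
  have hd := hD.2 i
  have hl := hΛ.2 i
  have hpos : 0 < (D i i)⁻¹ * Λ i i := mul_pos (inv_pos.mpr hd) hl
  rw [Pi.coe_exp, ← Real.exp_eq_exp_ℝ, Real.exp_log hpos]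
  field_simp

lemma frobSq_diagonal (v : Fin p → ℝ) : frobSq (Matrix.diagonal v) = ∑ i, (v i)^2 := by
  unfold frobSq
  refine Finset.sum_congr rfl fun i _ => ?_
  rw [Finset.sum_eq_single i]
  · rw [Matrix.diagonal_apply_eq]
  · intro j _ hji; rw [Matrix.diagonal_apply_ne' _ hji]; ring
  · intro h; exact absurd (Finset.mem_univ i) h

lemma dSOsq_eq {U V A : Mat p} (hA : IsAntisym A) (hexp : exp A = V * Uᵀ)
    (hAmin : ∀ A' : Mat p, IsAntisym A' → exp A' = V * Uᵀ → frobSq A ≤ frobSq A') :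
    dSOsq U V = frobSq A / 2 := by
  have hmem : frobSq A / 2 ∈
      {x | ∃ A' : Mat p, IsAntisym A' ∧ exp A' = V * Uᵀ ∧ x = frobSq A' / 2} :=
    ⟨A, hA, hexp, rfl⟩
  unfold dSOsq
  apply le_antisymm
  · apply csInf_le
    · refine ⟨0, fun x hx => ?_⟩
      obtain ⟨A', _, _, rfl⟩ := hx
      have := frobSq_nonneg A'; linarith
    · exact hmem
  · apply le_csInf ⟨_, hmem⟩
    rintro x ⟨A', h1, h2, rfl⟩
    have := hAmin A' h1 h2; linarith

lemma dDsq_eq {D Λ L : Mat p} (hD : IsDiagPos D) (hΛ : IsDiagPos Λ)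
    (hL : L = Matrix.diagonal fun i => Real.log ((D i i)⁻¹ * Λ i i)) :
    dDsq D Λ = frobSq L := by
  rw [hL, frobSq_diagonal]
  refine Finset.sum_congr rfl fun i _ => ?_
  rw [Real.log_mul (ne_of_gt (inv_pos.mpr (hD.2 i))) (ne_of_gt (hΛ.2 i)), Real.log_inv]
  ring

lemma energy_eq {k : ℝ} (hk : 0 < k) {X Y U D V Λ A L : Mat p}
    (hmin : gdist k (U, D) (V, Λ) = dSR k X Y)
    (hD : IsDiagPos D) (hΛ : IsDiagPos Λ)
    (hA : IsAntisym A) (hexp : exp A = V * Uᵀ)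
    (hAmin : ∀ A' : Mat p, IsAntisym A' → exp A' = V * Uᵀ → frobSq A ≤ frobSq A')
    (hL : L = Matrix.diagonal fun i => Real.log ((D i i)⁻¹ * Λ i i)) :
    k * frobSq A / 2 + frobSq L = (dSR k X Y)^2 := by
  rw [← hmin]
  unfold gdist
  dsimp only
  rw [dSOsq_eq hA hexp hAmin, dDsq_eq hD hΛ hL, Real.sq_sqrt]
  · ring
  · have h1 := frobSq_nonneg A
    have h2 := frobSq_nonneg L
    have : 0 ≤ k * (frobSq A / 2) := mul_nonneg hk.le (by linarith)
    linarith

lemma endpoint {Y U D V Λ A L : Mat p}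
    (hUU : U * Uᵀ = 1)
    (hV : V * Vᵀ = 1) (hΛ : IsDiagPos Λ) (hY : V * Λ * Vᵀ = Y)
    (hD : IsDiagPos D)
    (hA : IsAntisym A) (hexp : exp A = V * Uᵀ)
    (hL : L = Matrix.diagonal fun i => Real.log ((D i i)⁻¹ * Λ i i)) :
    exp A * U * D * exp L * Uᵀ * exp Aᵀ = Y := by
  have hUtU : Uᵀ * U = 1 := mul_eq_one_comm.mp hUU
  have h1 : exp Aᵀ = U * Vᵀ := by rw [hA]; exact exp_neg_eq hUtU hV hexp
  rw [hexp, h1]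
  have h2 : V * Uᵀ * U = V := by rw [Matrix.mul_assoc, hUtU, Matrix.mul_one]
  calc V * Uᵀ * U * D * exp L * Uᵀ * (U * Vᵀ)
      = V * (D * exp L) * (Uᵀ * U) * Vᵀ := by
        rw [h2]; noncomm_ring [Matrix.mul_assoc]
    _ = Y := by rw [hUtU, D_mul_exp_L hD hΛ hL, Matrix.mul_one, hY]

end SRAux2

namespace SRAux3
open SRAux SRAux2 NormedSpace Set Topology Filter
attribute [local instance] Matrix.linftyOpNormedRing Matrix.linftyOpNormedAlgebra
variable {p : ℕ}

lemma fip_add_right (Xm Ym Zm : Mat p) : fip Xm (Ym + Zm) = fip Xm Ym + fip Xm Zm := by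
  simp [fip, Matrix.add_apply, mul_add, Finset.sum_add_distrib]

/-- Antisymmetric matrices as a submodule. -/
def antisymSub (p : ℕ) : Submodule ℝ (Mat p) where
  carrier := {x | xᵀ = -x}
  add_mem' := by
    intro a b ha hb
    simp only [Set.mem_setOf_eq] at *
    rw [Matrix.transpose_add, ha, hb, neg_add]
  zero_mem' := by simp
  smul_mem' := by
    intro c x hx
    simp only [Set.mem_setOf_eq] at *
    rw [Matrix.transpose_smul, hx, smul_neg]

/-- Commutant of a fixed matrix as a submodule. -/
def commSub {p : ℕ} (Λt : Mat p) : Submodule ℝ (Mat p) where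
  carrier := {x | x * Λt = Λt * x}
  add_mem' := by
    intro a b ha hb
    simp only [Set.mem_setOf_eq] at *
    rw [Matrix.add_mul, Matrix.mul_add, ha, hb]
  zero_mem' := by simp
  smul_mem' := by
    intro c x hx
    simp only [Set.mem_setOf_eq] at *
    rw [Matrix.smul_mul, Matrix.mul_smul, hx]

lemma fip_S_skew {Am : Mat p} (hAm : IsAntisym Am) (x y : Mat p) :
    fip (Am * x - x * Am) y = - fip x (Am * y - y * Am) := by
  rw [fip_trace, fip_trace]
  have h1 : (Am * x - x * Am)ᵀ = Am * xᵀ - xᵀ * Am := by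
    rw [Matrix.transpose_sub, Matrix.transpose_mul, Matrix.transpose_mul, hAm]
    noncomm_ring
  rw [h1, Matrix.sub_mul, Matrix.mul_sub, Matrix.trace_sub, Matrix.trace_sub]
  have h2 : Matrix.trace (Am * xᵀ * y) = Matrix.trace (xᵀ * (y * Am)) := by
    rw [Matrix.trace_mul_cycle, Matrix.trace_mul_cycle, Matrix.mul_assoc]
  have h3 : Matrix.trace (xᵀ * Am * y) = Matrix.trace (xᵀ * (Am * y)) := by
    rw [Matrix.mul_assoc]
  rw [h2, h3]
  ring

lemma fip_S_Am {Am : Mat p} (hAm : IsAntisym Am) (w : Mat p) :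
    fip Am (Am * w - w * Am) = 0 := by
  have h := fip_S_skew hAm w Am
  have h0 : Am * Am - Am * Am = 0 := sub_self _
  rw [fip_comm] at h
  rw [h, h0, ]
  simp [fip]

/-- The key linear-algebra core: existence of the competitor direction. -/
lemma linear_core (Am B Λt : Mat p) (hAm : IsAntisym Am) (hB : IsAntisym B)
    (hcomm : ∀ t ∈ Ioo (0:ℝ) 1,
      (exp (t • (-Am)) * B * exp (t • Am)) * Λt
        = Λt * (exp (t • (-Am)) * B * exp (t • Am))) :
    ∃ C : Mat p, IsAntisym C ∧ C * Λt = Λt * C ∧ Am * C = C * Am ∧ fip Am C = fip Am B := by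
  classical
  set f : ℝ → Mat p := fun t => exp (t • (-Am)) * B * exp (t • Am) with hf
  -- basic facts about f
  have hfd : ∀ t : ℝ, HasDerivAt f (f t * Am - Am * f t) t := by
    intro t
    have hd1 : HasDerivAt (fun u : ℝ => exp (u • (-Am))) ((-Am) * exp (t • (-Am))) t :=
      hasDerivAt_exp_smul_const' (-Am) t
    have hd3 : HasDerivAt (fun u : ℝ => exp (u • Am)) (exp (t • Am) * Am) t :=
      hasDerivAt_exp_smul_const Am t
    have key : (-Am) * exp (t • (-Am)) * B * exp (t • Am)
        + exp (t • (-Am)) * B * (exp (t • Am) * Am)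
        = f t * Am - Am * f t := by
      simp only [hf]
      generalize exp (t • (-Am)) = E1
      generalize exp (t • Am) = E2
      noncomm_ring
    exact key ▸ (hd1.mul_const B).mul hd3
  have hfc : Continuous f := by
    rw [continuous_iff_continuousAt]
    exact fun t => (hfd t).continuousAt
  have hf0 : f 0 = B := by
    simp [hf, zero_smul, exp_zero]
  set W : Submodule ℝ (Mat p) := Submodule.span ℝ (f '' Ioo (0:ℝ) 1) with hW
  have hWclosed : IsClosed (W : Set (Mat p)) := Submodule.closed_of_finiteDimensional W
  -- f t is antisymmetric
  have hfanti : ∀ t : ℝ, (f t)ᵀ = -(f t) := by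
    intro t
    have e2 : (exp (t • Am))ᵀ = exp (t • (-Am)) := by
      rw [← Matrix.exp_transpose, Matrix.transpose_smul, hAm, smul_neg, ← smul_neg]
    have e1 : (exp (t • (-Am)))ᵀ = exp (t • Am) := by
      rw [← Matrix.exp_transpose, Matrix.transpose_smul, Matrix.transpose_neg, hAm, neg_neg]
    simp only [hf]
    rw [Matrix.transpose_mul, Matrix.transpose_mul, e2, e1, hB]
    noncomm_ring
  -- W is contained in antisym ∩ commutant
  have hWle : W ≤ antisymSub p ⊓ commSub Λt := by
    rw [hW]
    apply Submodule.span_le.mpr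
    rintro x ⟨t, ht, rfl⟩
    exact Submodule.mem_inf.mpr ⟨hfanti t, hcomm t ht⟩
  set Slin : Mat p →ₗ[ℝ] Mat p := LinearMap.mulLeft ℝ Am - LinearMap.mulRight ℝ Am with hSlin
  have hSlin_apply : ∀ x, Slin x = Am * x - x * Am := by
    intro x
    simp [hSlin, LinearMap.mulLeft_apply, LinearMap.mulRight_apply]
  -- S-invariance of W (via derivatives staying in the closed submodule W)
  have hSgen : ∀ t, t ∈ Ioo (0:ℝ) 1 → Slin (f t) ∈ W := by
    intro t ht
    have hslope := hasDerivAt_iff_tendsto_slope.mp (hfd t)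
    have hmono : 𝓝[Ioo t 1] t ≤ 𝓝[≠] t :=
      nhdsWithin_mono t (fun u hu => ne_of_gt hu.1)
    have hnb : (𝓝[Ioo t 1] t).NeBot := by
      rw [nhdsWithin_Ioo_eq_nhdsGT ht.2]; infer_instance
    have htend : Filter.Tendsto (slope f t) (𝓝[Ioo t 1] t) (𝓝 (f t * Am - Am * f t)) :=
      hslope.mono_left hmono
    have hmem : ∀ᶠ u in 𝓝[Ioo t 1] t, slope f t u ∈ (W : Set (Mat p)) := by
      apply eventually_nhdsWithin_of_forall
      intro u hu
      have hu01 : u ∈ Ioo (0:ℝ) 1 := ⟨lt_trans ht.1 hu.1, hu.2⟩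
      have h1 : f u ∈ W := Submodule.subset_span ⟨u, hu01, rfl⟩
      have h2 : f t ∈ W := Submodule.subset_span ⟨t, ht, rfl⟩
      rw [slope_def_module]
      exact W.smul_mem _ (W.sub_mem h1 h2)
    have hd_memW : f t * Am - Am * f t ∈ W := hWclosed.mem_of_tendsto htend hmem
    have := W.neg_mem hd_memW
    rw [neg_sub] at this
    rw [hSlin_apply]
    exact this
  have hSW : Submodule.map Slin W ≤ W := by
    rw [hW, Submodule.map_span]
    apply Submodule.span_le.mpr
    rintro y ⟨x, ⟨t, ht, rfl⟩, rfl⟩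
    exact hSgen t ht
  have hBW : B ∈ W := by
    have htd : Filter.Tendsto f (𝓝[Ioo (0:ℝ) 1] 0) (𝓝 B) := by
      rw [← hf0]
      exact (hfc.tendsto 0).mono_left nhdsWithin_le_nhds
    have hnb : (𝓝[Ioo (0:ℝ) 1] 0).NeBot := by
      rw [nhdsWithin_Ioo_eq_nhdsGT zero_lt_one]; infer_instance
    have hmem : ∀ᶠ u in 𝓝[Ioo (0:ℝ) 1] 0, f u ∈ (W : Set (Mat p)) :=
      eventually_nhdsWithin_of_forall (fun u hu => Submodule.subset_span ⟨u, hu, rfl⟩)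
    exact hWclosed.mem_of_tendsto htd hmem
  -- transport to Euclidean space and orthogonally decompose
  let e : Mat p ≃ₗ[ℝ] EuclideanSpace ℝ (Fin p × Fin p) :=
    (LinearEquiv.curry ℝ ℝ (Fin p) (Fin p)).symm.trans
      (WithLp.linearEquiv 2 ℝ ((Fin p × Fin p) → ℝ)).symm
  have hinner : ∀ x y : Mat p, (inner ℝ (e x) (e y) : ℝ) = fip x y := by
    intro x y
    rw [PiLp.inner_apply]
    simp only [RCLike.inner_apply, starRingEnd_apply, star_trivial]
    rw [fip, Fintype.sum_prod_type]
    exact Finset.sum_congr rfl fun i _ => Finset.sum_congr rfl fun j _ => mul_comm _ _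
  set K : Submodule ℝ (Mat p) := Submodule.map Slin W with hK
  have hKW : K ≤ W := hSW
  set K' : Submodule ℝ (EuclideanSpace ℝ (Fin p × Fin p)) :=
    K.map (e : Mat p →ₗ[ℝ] EuclideanSpace ℝ (Fin p × Fin p)) with hK'
  obtain ⟨y', hy', z', hz', hsum⟩ := K'.exists_add_mem_mem_orthogonal (e B)
  obtain ⟨y, hyK, hye⟩ := hy'
  set z : Mat p := B - y with hz
  have hye' : e y = y' := by simpa using hye
  have hez : e z = z' := by
    rw [hz, map_sub, hye', hsum]
    abel
  have hzW : z ∈ W := W.sub_mem hBW (hKW hyK)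
  have horth : ∀ wv, wv ∈ K → fip wv z = 0 := by
    intro wv hwv
    rw [← hinner, hez]
    exact (Submodule.mem_orthogonal K' z').mp hz' (e wv) ⟨wv, hwv, rfl⟩
  have hSz : Slin z = 0 := by
    have hSzW : Slin z ∈ K := Submodule.mem_map_of_mem hzW
    have hSSzK : Slin (Slin z) ∈ K := Submodule.mem_map_of_mem (hKW hSzW)
    have h1 : fip (Slin z) (Slin z) = 0 := by
      have hskew := fip_S_skew hAm z (Slin z)
      rw [← hSlin_apply, ← hSlin_apply] at hskew
      rw [hskew, fip_comm]
      rw [horth _ hSSzK]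
      ring
    apply frobSq_eq_zero
    rw [frobSq_eq_fip]
    exact h1
  have hzmem := Submodule.mem_inf.mp (hWle hzW)
  refine ⟨z, hzmem.1, hzmem.2, ?_, ?_⟩
  · have := hSlin_apply z
    rw [hSz] at this
    have := sub_eq_zero.mp this.symm
    exact this
  · have hBdec : B = y + z := by rw [hz]; abel
    obtain ⟨w, hwW, hwe⟩ := hyK
    have hfy : fip Am y = 0 := by
      rw [← hwe, hSlin_apply]
      exact fip_S_Am hAm w
    rw [hBdec, fip_add_right, hfy, zero_add]


end SRAux3

namespace SRAux4
open SRAux SRAux2 SRAux3 NormedSpace Set Topology Filter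
attribute [local instance] Matrix.linftyOpNormedRing Matrix.linftyOpNormedAlgebra
variable {p : ℕ}

lemma cancel_left {u v : Mat p} (h : u * v = 1) (x : Mat p) : u * (v * x) = x := by
  rw [← Matrix.mul_assoc, h, Matrix.one_mul]

lemma conj_transfer {a a' b b' n m : Mat p} (h : a * n * a' = b * m * b')
    (ha : a' * a = 1) (hb : b' * b = 1) : (b' * a) * n = m * (b' * a) := by
  have h2 := congrArg (fun x => b' * (x * a)) h
  rw [Matrix.mul_assoc (a * n) a' a, ha, Matrix.mul_one] at h2
  rw [Matrix.mul_assoc (b * m) b' a] at h2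
  rw [← Matrix.mul_assoc b' (b * m) (b' * a), ← Matrix.mul_assoc b' b m, hb,
    Matrix.one_mul] at h2
  rw [← Matrix.mul_assoc] at h2
  exact h2

lemma commute_inv {Pm Pi Λt : Mat p} (h : Pm * Λt = Λt * Pm) (h1 : Pm * Pi = 1)
    (h2 : Pi * Pm = 1) : Pi * Λt = Λt * Pi := by
  calc Pi * Λt = Pi * Λt * (Pm * Pi) := by rw [h1, Matrix.mul_one]
    _ = Pi * (Λt * Pm) * Pi := by simp only [Matrix.mul_assoc]
    _ = Pi * (Pm * Λt) * Pi := by rw [h]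
    _ = (Pi * Pm) * (Λt * Pi) := by simp only [Matrix.mul_assoc]
    _ = Λt * Pi := by rw [h2, Matrix.one_mul]

lemma Pprime_formula {E1 E2 E3 E4 Am A1 : Mat p}
    (h1 : E2 * A1 = A1 * E2) (h2 : Am * E1 = E1 * Am) (h3 : E2 * E3 = 1) :
    ((E1 * E2) * A1 - Am * (E1 * E2)) * (E3 * E4) = E1 * (A1 - Am) * E4 := by
  rw [Matrix.sub_mul, Matrix.mul_sub E1, Matrix.sub_mul]
  congr 1
  · have s1 : (E1 * E2) * A1 * (E3 * E4) = E1 * (A1 * (E2 * (E3 * E4))) := by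
      rw [Matrix.mul_assoc E1 E2 A1, h1]; simp only [Matrix.mul_assoc]
    have s2 : E2 * (E3 * E4) = E4 := by
      rw [← Matrix.mul_assoc E2 E3 E4, h3, Matrix.one_mul]
    rw [s1, s2, ← Matrix.mul_assoc]
  · have s1 : Am * (E1 * E2) * (E3 * E4) = E1 * (Am * (E2 * (E3 * E4))) := by
      rw [← Matrix.mul_assoc Am E1 E2, h2]; simp only [Matrix.mul_assoc]
    have s2 : E2 * (E3 * E4) = E4 := by
      rw [← Matrix.mul_assoc E2 E3 E4, h3, Matrix.one_mul]
    rw [s1, s2, ← Matrix.mul_assoc]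

lemma exp_smul_diagonal (v : Fin p → ℝ) (t : ℝ) :
    exp (t • Matrix.diagonal v) = Matrix.diagonal (fun i => Real.exp (t * v i)) := by
  rw [← Matrix.diagonal_smul, Matrix.exp_diagonal]
  refine congrArg Matrix.diagonal (funext fun i => ?_)
  rw [Pi.coe_exp, ← Real.exp_eq_exp_ℝ]
  simp [smul_eq_mul]

lemma isSO_mul {a b : Mat p} (ha : IsSO a) (hb : IsSO b) : IsSO (a * b) := by
  constructor
  · rw [Matrix.transpose_mul, Matrix.mul_assoc, ← Matrix.mul_assoc b bᵀ, hb.1,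
      Matrix.one_mul, ha.1]
  · rw [Matrix.det_mul, ha.2, hb.2, one_mul]

lemma fip_zero_right (Xm : Mat p) : fip Xm 0 = 0 := by simp [fip]

end SRAux4

namespace SRAux5
open SRAux SRAux2 SRAux3 SRAux4 NormedSpace Set Topology Filter
attribute [local instance] Matrix.linftyOpNormedRing Matrix.linftyOpNormedAlgebra
variable {p : ℕ}

/-- The relative rotation curve. -/
noncomputable def Pc (A A₁ : Mat p) (t : ℝ) : Mat p := exp (t • (-A)) * exp (t • A₁)

lemma Pc_apply (A A₁ : Mat p) (t : ℝ) :
    Pc A A₁ t = exp (t • (-A)) * exp (t • A₁) := rfl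

lemma exp_smul_cancel (M : Mat p) (t : ℝ) : exp (t • M) * exp (t • (-M)) = 1 := by
  rw [smul_neg, exp_mul_exp_neg]

lemma exp_smul_cancel' (M : Mat p) (t : ℝ) : exp (t • (-M)) * exp (t • M) = 1 := by
  rw [smul_neg, exp_neg_mul_exp]

lemma Pc_hasDeriv (A A₁ : Mat p) (t : ℝ) :
    HasDerivAt (Pc A A₁) (Pc A A₁ t * A₁ - A * Pc A A₁ t) t := by
  have hd1 := hasDerivAt_exp_smul_const' (-A) t
  have hd2 := hasDerivAt_exp_smul_const A₁ t
  have key : (-A) * exp (t • (-A)) * exp (t • A₁) + exp (t • (-A)) * (exp (t • A₁) * A₁)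
      = Pc A A₁ t * A₁ - A * Pc A A₁ t := by
    unfold Pc
    generalize exp (t • (-A)) = E1
    generalize exp (t • A₁) = E2
    noncomm_ring
  exact key ▸ hd1.mul hd2

lemma Pc_cont (A A₁ : Mat p) : Continuous (Pc A A₁) := by
  rw [continuous_iff_continuousAt]
  exact fun t => (Pc_hasDeriv A A₁ t).continuousAt

lemma Pc_zero (A A₁ : Mat p) : Pc A A₁ 0 = 1 := by
  unfold Pc
  simp [zero_smul, exp_zero]

lemma conj_comm_transfer {U qm Λ : Mat p} (hUtU : Uᵀ * U = 1) (h : qm * Λ = Λ * qm) :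
    (U * (qm * Uᵀ)) * (U * Λ * Uᵀ) = (U * Λ * Uᵀ) * (U * (qm * Uᵀ)) := by
  have e1 : (U * (qm * Uᵀ)) * (U * Λ * Uᵀ) = U * (qm * (Λ * Uᵀ)) := by
    simp only [Matrix.mul_assoc]
    rw [cancel_left hUtU]
  have e2 : (U * Λ * Uᵀ) * (U * (qm * Uᵀ)) = U * (Λ * (qm * Uᵀ)) := by
    simp only [Matrix.mul_assoc]
    rw [cancel_left hUtU]
  rw [e1, e2, ← Matrix.mul_assoc qm Λ Uᵀ, h, Matrix.mul_assoc]

lemma version_conj {A' U Λ Y : Mat p} (hA' : IsAntisym A')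
    (h : exp A' * (U * Λ * Uᵀ) * exp (-A') = Y) :
    (exp A' * U) * Λ * (exp A' * U)ᵀ = Y := by
  rw [Matrix.transpose_mul, ← Matrix.exp_transpose, hA', ← h]
  simp only [Matrix.mul_assoc]

lemma conj_inner {E S Si Ei Λt Y : Mat p}
    (hcomm : S * Λt = Λt * S) (hcancel : S * Si = 1)
    (hE : E * Λt * Ei = Y) :
    (E * S) * Λt * (Si * Ei) = Y := by
  have h1 : S * Λt * Si = Λt := by
    rw [hcomm, Matrix.mul_assoc, hcancel, Matrix.mul_one]
  calc (E * S) * Λt * (Si * Ei) = E * (S * Λt * Si) * Ei := by simp only [Matrix.mul_assoc]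
    _ = E * Λt * Ei := by rw [h1]
    _ = Y := hE

lemma fc_commute {A A₁ Λt : Mat p}
    (hPΛ : ∀ t ∈ Icc (0:ℝ) 1, Pc A A₁ t * Λt = Λt * Pc A A₁ t) :
    ∀ t ∈ Ioo (0:ℝ) 1,
      (exp (t • (-A)) * (A₁ - A) * exp (t • A)) * Λt
        = Λt * (exp (t • (-A)) * (A₁ - A) * exp (t • A)) := by
  intro t ht
  have htIcc : t ∈ Icc (0:ℝ) 1 := Ioo_subset_Icc_self ht
  have hPd := Pc_hasDeriv A A₁ t
  have hg1 : HasDerivAt (fun u => Pc A A₁ u * Λt)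
      ((Pc A A₁ t * A₁ - A * Pc A A₁ t) * Λt) t := hPd.mul_const Λt
  have hg2 : HasDerivAt (fun u => Λt * Pc A A₁ u)
      (Λt * (Pc A A₁ t * A₁ - A * Pc A A₁ t)) t := hPd.const_mul Λt
  have hev : (fun u => Pc A A₁ u * Λt) =ᶠ[𝓝 t] (fun u => Λt * Pc A A₁ u) := by
    filter_upwards [isOpen_Ioo.mem_nhds ht] with u hu
    exact hPΛ u (Ioo_subset_Icc_self hu)
  have hcomm' : (Pc A A₁ t * A₁ - A * Pc A A₁ t) * Λt
      = Λt * (Pc A A₁ t * A₁ - A * Pc A A₁ t) :=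
    hg1.unique (hg2.congr_of_eventuallyEq hev)
  have hE2A₁ : exp (t • A₁) * A₁ = A₁ * exp (t • A₁) :=
    (((Commute.refl A₁).smul_left t).exp_left).eq
  have hAE1 : A * exp (t • (-A)) = exp (t • (-A)) * A :=
    ((((Commute.refl A).neg_right).smul_right t).exp_right).eq
  have hE2E3 : exp (t • A₁) * exp (t • (-A₁)) = 1 := exp_smul_cancel A₁ t
  have hfeq : exp (t • (-A)) * (A₁ - A) * exp (t • A)
      = (Pc A A₁ t * A₁ - A * Pc A A₁ t) * (exp (t • (-A₁)) * exp (t • A)) :=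
    (Pprime_formula hE2A₁ hAE1 hE2E3).symm
  have hPinv1 : Pc A A₁ t * (exp (t • (-A₁)) * exp (t • A)) = 1 := by
    rw [Pc_apply]
    calc (exp (t • (-A)) * exp (t • A₁)) * (exp (t • (-A₁)) * exp (t • A))
        = exp (t • (-A)) * ((exp (t • A₁) * exp (t • (-A₁))) * exp (t • A)) := by
          simp only [Matrix.mul_assoc]
      _ = 1 := by rw [exp_smul_cancel, Matrix.one_mul, exp_smul_cancel']
  have hPinv2 : (exp (t • (-A₁)) * exp (t • A)) * Pc A A₁ t = 1 := by
    rw [Pc_apply]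
    calc (exp (t • (-A₁)) * exp (t • A)) * (exp (t • (-A)) * exp (t • A₁))
        = exp (t • (-A₁)) * ((exp (t • A) * exp (t • (-A))) * exp (t • A₁)) := by
          simp only [Matrix.mul_assoc]
      _ = 1 := by rw [exp_smul_cancel, Matrix.one_mul, exp_smul_cancel']
  have hPinvΛ : (exp (t • (-A₁)) * exp (t • A)) * Λt
      = Λt * (exp (t • (-A₁)) * exp (t • A)) :=
    commute_inv (hPΛ t htIcc) hPinv1 hPinv2
  rw [hfeq]
  calc (Pc A A₁ t * A₁ - A * Pc A A₁ t) * (exp (t • (-A₁)) * exp (t • A)) * Λt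
      = (Pc A A₁ t * A₁ - A * Pc A A₁ t) * ((exp (t • (-A₁)) * exp (t • A)) * Λt) :=
        Matrix.mul_assoc _ _ _
    _ = (Pc A A₁ t * A₁ - A * Pc A A₁ t) * (Λt * (exp (t • (-A₁)) * exp (t • A))) := by
        rw [hPinvΛ]
    _ = ((Pc A A₁ t * A₁ - A * Pc A A₁ t) * Λt) * (exp (t • (-A₁)) * exp (t • A)) := by
        rw [← Matrix.mul_assoc]
    _ = (Λt * (Pc A A₁ t * A₁ - A * Pc A A₁ t)) * (exp (t • (-A₁)) * exp (t • A)) := by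
        rw [hcomm']
    _ = Λt * ((Pc A A₁ t * A₁ - A * Pc A A₁ t) * (exp (t • (-A₁)) * exp (t • A))) :=
        Matrix.mul_assoc _ _ _

lemma diagPos_mul_diagonal {D : Mat p} (hD : D.IsDiag) (w : Fin p → ℝ) :
    D * Matrix.diagonal w = Matrix.diagonal (fun i => D i i * w i) := by
  nth_rewrite 1 [← hD.diagonal_diag]
  rw [Matrix.diagonal_mul_diagonal]
  rfl

end SRAux5

open SRAux SRAux2 SRAux3 SRAux4 SRAux5 Set Topology Filter

attribute [local instance] Matrix.linftyOpNormedRing Matrix.linftyOpNormedAlgebra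

/-- non-uniqueness of minimal scaling–rotation curves when a second
minimizing version of `Y` exists. -/
theorem minimal_curve_nonunique {p : ℕ} (hp : 2 ≤ p) (k : ℝ) (hk : 0 < k)
    (X Y : Mat p) (hX : X.PosDef) (hY : Y.PosDef)
    (U D V Λ : Mat p) (hUD : (U, D) ∈ Versions X) (hVL : (V, Λ) ∈ Versions Y)
    (hmin : gdist k (U, D) (V, Λ) = dSR k X Y)
    (A : Mat p) (hA : IsAntisym A) (hexp : NormedSpace.exp A = V * Uᵀ)
    (hAmin : ∀ A' : Mat p, IsAntisym A' → NormedSpace.exp A' = V * Uᵀ →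
      frobSq A ≤ frobSq A')
    (L : Mat p) (hLdef : L = Matrix.diagonal fun i => Real.log ((D i i)⁻¹ * Λ i i))
    (V₁ Λ₁ : Mat p) (hV₁L₁ : (V₁, Λ₁) ∈ Versions Y) (hne : (V₁, Λ₁) ≠ (V, Λ))
    (hmin₁ : gdist k (U, D) (V₁, Λ₁) = dSR k X Y)
    (A₁ : Mat p) (hA₁ : IsAntisym A₁) (hexp₁ : NormedSpace.exp A₁ = V₁ * Uᵀ)
    (hA₁min : ∀ A' : Mat p, IsAntisym A' → NormedSpace.exp A' = V₁ * Uᵀ →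
      frobSq A₁ ≤ frobSq A')
    (L₁ : Mat p) (hL₁def : L₁ = Matrix.diagonal fun i => Real.log ((D i i)⁻¹ * Λ₁ i i)) :
    (NormedSpace.exp ((0 : ℝ) • A₁) * U * D * NormedSpace.exp ((0 : ℝ) • L₁) * Uᵀ *
        NormedSpace.exp ((0 : ℝ) • A₁ᵀ) = X) ∧
    (NormedSpace.exp ((1 : ℝ) • A₁) * U * D * NormedSpace.exp ((1 : ℝ) • L₁) * Uᵀ *
        NormedSpace.exp ((1 : ℝ) • A₁ᵀ) = Y) ∧
    (k * frobSq A₁ / 2 + frobSq L₁ = (dSR k X Y) ^ 2) ∧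
    (∃ t ∈ Set.Icc (0 : ℝ) 1,
      NormedSpace.exp (t • A₁) * U * D * NormedSpace.exp (t • L₁) * Uᵀ *
          NormedSpace.exp (t • A₁ᵀ)
        ≠ NormedSpace.exp (t • A) * U * D * NormedSpace.exp (t • L) * Uᵀ *
            NormedSpace.exp (t • Aᵀ)) := by
  classical
  obtain ⟨hUso, hDdp, hXeq⟩ := hUD
  obtain ⟨hVso, hΛdp, hYeq⟩ := hVL
  obtain ⟨hV₁so, hΛ₁dp, hY₁eq⟩ := hV₁L₁
  dsimp only at hUso hDdp hXeq hVso hΛdp hYeq hV₁so hΛ₁dp hY₁eq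
  have hUUt : U * Uᵀ = 1 := hUso.1
  have hUtU : Uᵀ * U = 1 := mul_eq_one_comm.mp hUUt
  refine ⟨?_, ?_, ?_, ?_⟩
  · simp only [zero_smul, NormedSpace.exp_zero, Matrix.mul_one, Matrix.one_mul]
    exact hXeq
  · simp only [one_smul]
    exact endpoint hUUt hV₁so.1 hΛ₁dp hY₁eq hDdp hA₁ hexp₁ hL₁def
  · exact energy_eq hk hmin₁ hDdp hΛ₁dp hA₁ hexp₁ hA₁min hL₁def
  · by_contra hcon
    push_neg at hcon
    -- Step 1: transfer the curve equality to the relative rotation `Pc A A₁`.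
    have hconP : ∀ t ∈ Icc (0:ℝ) 1,
        Pc A A₁ t * (U * D * NormedSpace.exp (t • L₁) * Uᵀ)
          = (U * D * NormedSpace.exp (t • L) * Uᵀ) * Pc A A₁ t := by
      intro t ht
      have h := hcon t ht
      rw [exp_smul_transpose hA₁ t, exp_smul_transpose hA t, ← smul_neg t A₁,
        ← smul_neg t A] at h
      have h' : NormedSpace.exp (t • A₁) * (U * D * NormedSpace.exp (t • L₁) * Uᵀ) *
            NormedSpace.exp (t • (-A₁))
          = NormedSpace.exp (t • A) * (U * D * NormedSpace.exp (t • L) * Uᵀ) *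
            NormedSpace.exp (t • (-A)) := by
        simpa only [Matrix.mul_assoc] using h
      have h2 := conj_transfer h' (exp_smul_cancel' A₁ t) (exp_smul_cancel' A t)
      simpa only [Pc_apply, Matrix.mul_assoc] using h2
    set q : ℝ → Mat p := fun t => Uᵀ * (Pc A A₁ t * U) with hqdef
    have hQrel : ∀ t ∈ Icc (0:ℝ) 1,
        q t * (D * NormedSpace.exp (t • L₁)) = (D * NormedSpace.exp (t • L)) * q t := by
      intro t ht
      have h := hconP t ht
      have h2 := congrArg (fun x => Uᵀ * (x * U)) h
      have e1 : Uᵀ * ((Pc A A₁ t * (U * D * NormedSpace.exp (t • L₁) * Uᵀ)) * U)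
          = q t * (D * NormedSpace.exp (t • L₁)) := by
        simp only [hqdef, Matrix.mul_assoc, hUtU, Matrix.mul_one]
      have e2 : Uᵀ * (((U * D * NormedSpace.exp (t • L) * Uᵀ) * Pc A A₁ t) * U)
          = (D * NormedSpace.exp (t • L)) * q t := by
        simp only [hqdef, Matrix.mul_assoc]
        rw [← Matrix.mul_assoc Uᵀ U, hUtU, Matrix.one_mul]
      rw [e1, e2] at h2
      exact h2
    -- diagonal entries
    have hDL : ∀ t : ℝ, D * NormedSpace.exp (t • L) = Matrix.diagonal
        (fun i => D i i * Real.exp (t * Real.log ((D i i)⁻¹ * Λ i i))) := by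
      intro t
      rw [hLdef, exp_smul_diagonal, diagPos_mul_diagonal hDdp.1]
    have hDL₁ : ∀ t : ℝ, D * NormedSpace.exp (t • L₁) = Matrix.diagonal
        (fun i => D i i * Real.exp (t * Real.log ((D i i)⁻¹ * Λ₁ i i))) := by
      intro t
      rw [hL₁def, exp_smul_diagonal, diagPos_mul_diagonal hDdp.1]
    have hQentry : ∀ t ∈ Icc (0:ℝ) 1, ∀ i j,
        q t i j * (D j j * Real.exp (t * Real.log ((D j j)⁻¹ * Λ₁ j j)))
          = (D i i * Real.exp (t * Real.log ((D i i)⁻¹ * Λ i i))) * q t i j := by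
      intro t ht i j
      have h := hQrel t ht
      rw [hDL t, hDL₁ t] at h
      have hij := congrFun (congrFun h i) j
      rwa [Matrix.mul_diagonal, Matrix.diagonal_mul] at hij
    have hqcont : ∀ i j, Continuous fun t => q t i j := by
      intro i j
      have hq : Continuous q :=
        continuous_const.matrix_mul ((Pc_cont A A₁).matrix_mul continuous_const)
      exact hq.matrix_elem i j
    have hq0 : q 0 = 1 := by
      simp only [hqdef]
      rw [Pc_zero, Matrix.one_mul, hUtU]
    -- Step 2: the scaling parts agree
    have hLL : L₁ = L := by
      rw [hL₁def, hLdef]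
      refine congrArg Matrix.diagonal (funext fun i => ?_)
      by_contra hnei
      have h1 : q 0 i i = 1 := by rw [hq0]; exact Matrix.one_apply_eq i
      have hev : ∀ᶠ u in 𝓝 (0:ℝ), q u i i ≠ 0 := by
        have ht := (hqcont i i).tendsto 0
        rw [h1] at ht
        exact ht.eventually_ne one_ne_zero
      obtain ⟨δ, hδ, hball⟩ := Metric.eventually_nhds_iff.mp hev
      set t := min (δ/2) 1 with htdef
      have ht0 : 0 < t := lt_min (by linarith) one_pos
      have htmem : t ∈ Icc (0:ℝ) 1 := ⟨ht0.le, min_le_right _ _⟩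
      have htq : q t i i ≠ 0 := by
        apply hball
        rw [Real.dist_eq, sub_zero, abs_of_pos ht0]
        calc t ≤ δ/2 := min_le_left _ _
          _ < δ := by linarith
      have hent := hQentry t htmem i i
      have hD0 : D i i ≠ 0 := ne_of_gt (hDdp.2 i)
      have hx : (D i i * q t i i) * Real.exp (t * Real.log ((D i i)⁻¹ * Λ₁ i i))
          = (D i i * q t i i) * Real.exp (t * Real.log ((D i i)⁻¹ * Λ i i)) := by
        linear_combination hent
      have hexpeq := mul_left_cancel₀ (mul_ne_zero hD0 htq) hx
      have := Real.exp_injective hexpeq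
      exact hnei (mul_left_cancel₀ (ne_of_gt ht0) this)
    have hΛΛ : Λ₁ = Λ := by
      have hdiag : ∀ i, Λ₁ i i = Λ i i := by
        intro i
        have e1 : L₁ i i = Real.log ((D i i)⁻¹ * Λ₁ i i) := by
          rw [hL₁def]; exact Matrix.diagonal_apply_eq _ i
        have e2 : L i i = Real.log ((D i i)⁻¹ * Λ i i) := by
          rw [hLdef]; exact Matrix.diagonal_apply_eq _ i
        have h1 : Real.log ((D i i)⁻¹ * Λ₁ i i) = Real.log ((D i i)⁻¹ * Λ i i) := by
          rw [← e1, ← e2, hLL]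
        have hpos1 : 0 < (D i i)⁻¹ * Λ₁ i i :=
          mul_pos (inv_pos.mpr (hDdp.2 i)) (hΛ₁dp.2 i)
        have hpos2 : 0 < (D i i)⁻¹ * Λ i i :=
          mul_pos (inv_pos.mpr (hDdp.2 i)) (hΛdp.2 i)
        have h2 := congrArg Real.exp h1
        rw [Real.exp_log hpos1, Real.exp_log hpos2] at h2
        exact mul_left_cancel₀ (inv_ne_zero (ne_of_gt (hDdp.2 i))) h2
      ext i j
      by_cases hij : i = j
      · subst hij; exact hdiag i
      · rw [hΛ₁dp.1 hij, hΛdp.1 hij]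
    rw [hΛΛ] at hQentry
    -- Step 3: block-support of q
    have hQblock : ∀ i j, ¬(D i i = D j j ∧
          Real.log ((D i i)⁻¹ * Λ i i) = Real.log ((D j j)⁻¹ * Λ j j)) →
        ∀ t ∈ Icc (0:ℝ) 1, q t i j = 0 := by
      intro i j hne2
      have hdi : 0 < D i i := hDdp.2 i
      have hdj : 0 < D j j := hDdp.2 j
      have hzero_unique : ∀ t t' : ℝ,
          D j j * Real.exp (t * Real.log ((D j j)⁻¹ * Λ j j))
            = D i i * Real.exp (t * Real.log ((D i i)⁻¹ * Λ i i)) →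
          D j j * Real.exp (t' * Real.log ((D j j)⁻¹ * Λ j j))
            = D i i * Real.exp (t' * Real.log ((D i i)⁻¹ * Λ i i)) → t = t' := by
        intro t t' h h'
        have key : ∀ u : ℝ,
            D j j * Real.exp (u * Real.log ((D j j)⁻¹ * Λ j j))
              = D i i * Real.exp (u * Real.log ((D i i)⁻¹ * Λ i i)) →
            Real.log (D j j) + u * Real.log ((D j j)⁻¹ * Λ j j)
              = Real.log (D i i) + u * Real.log ((D i i)⁻¹ * Λ i i) := by
          intro u hu
          have := congrArg Real.log hu
          rwa [Real.log_mul hdj.ne' (Real.exp_ne_zero _),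
            Real.log_mul hdi.ne' (Real.exp_ne_zero _), Real.log_exp, Real.log_exp] at this
        have e1 := key t h
        have e2 := key t' h'
        by_cases hll : Real.log ((D i i)⁻¹ * Λ i i) = Real.log ((D j j)⁻¹ * Λ j j)
        · exfalso
          apply hne2
          refine ⟨?_, hll⟩
          have hld : Real.log (D i i) = Real.log (D j j) := by
            rw [hll] at e1; linarith
          have := congrArg Real.exp hld
          rwa [Real.exp_log hdi, Real.exp_log hdj] at this
        · have hfac : (t - t') * (Real.log ((D j j)⁻¹ * Λ j j)
              - Real.log ((D i i)⁻¹ * Λ i i)) = 0 := by linear_combination e1 - e2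
          rcases mul_eq_zero.mp hfac with h0 | h0
          · linarith
          · exfalso; apply hll; linarith
      intro t ht
      by_contra hq0'
      have hev : ∀ᶠ u in 𝓝 t, q u i j ≠ 0 := ((hqcont i j).tendsto t).eventually_ne hq0'
      obtain ⟨δ, hδ, hball⟩ := Metric.eventually_nhds_iff.mp hev
      obtain ⟨t', ht'mem, ht'ne, ht'close⟩ :
          ∃ t', t' ∈ Icc (0:ℝ) 1 ∧ t' ≠ t ∧ dist t' t < δ := by
        by_cases hlt : t < 1
        · refine ⟨min (t + δ/2) ((t+1)/2), ⟨?_, ?_⟩, ?_, ?_⟩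
          · have h1 : (0:ℝ) ≤ t := ht.1
            have : t < min (t + δ/2) ((t+1)/2) := lt_min (by linarith) (by linarith)
            linarith
          · calc min (t + δ/2) ((t+1)/2) ≤ (t+1)/2 := min_le_right _ _
              _ ≤ 1 := by linarith [ht.2]
          · have : t < min (t + δ/2) ((t+1)/2) := lt_min (by linarith) (by linarith)
            exact ne_of_gt this
          · have h1 : t < min (t + δ/2) ((t+1)/2) := lt_min (by linarith) (by linarith)
            rw [Real.dist_eq, abs_of_pos (by linarith)]
            calc min (t + δ/2) ((t+1)/2) - t ≤ (t + δ/2) - t := by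
                  have := min_le_left (t + δ/2) ((t+1)/2); linarith
              _ < δ := by linarith
        · have ht1 : t = 1 := le_antisymm ht.2 (not_lt.mp hlt)
          refine ⟨max (1 - δ/2) (1/2), ⟨?_, ?_⟩, ?_, ?_⟩
          · calc (0:ℝ) ≤ 1/2 := by norm_num
              _ ≤ max (1 - δ/2) (1/2) := le_max_right _ _
          · have h1 : (1:ℝ) - δ/2 < 1 := by linarith
            have h2 : (1:ℝ)/2 < 1 := by norm_num
            exact (max_lt h1 h2).le
          · have h1 : (1:ℝ) - δ/2 < 1 := by linarith
            have h2 : (1:ℝ)/2 < 1 := by norm_num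
            rw [ht1]
            exact ne_of_lt (max_lt h1 h2)
          · have h1 : (1:ℝ) - δ/2 ≤ max (1 - δ/2) (1/2) := le_max_left _ _
            have h2 : max ((1:ℝ) - δ/2) (1/2) < 1 := by
              apply max_lt (by linarith) (by norm_num)
            rw [ht1, Real.dist_eq, abs_of_nonpos (by linarith)]
            linarith
      have hc : ∀ u, u ∈ Icc (0:ℝ) 1 → q u i j ≠ 0 →
          D j j * Real.exp (u * Real.log ((D j j)⁻¹ * Λ j j))
            = D i i * Real.exp (u * Real.log ((D i i)⁻¹ * Λ i i)) := by
        intro u hu hqu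
        have hent := hQentry u hu i j
        have hfac : q u i j * (D j j * Real.exp (u * Real.log ((D j j)⁻¹ * Λ j j))
            - D i i * Real.exp (u * Real.log ((D i i)⁻¹ * Λ i i))) = 0 := by
          linear_combination hent
        rcases mul_eq_zero.mp hfac with h0 | h0
        · exact absurd h0 hqu
        · linarith
      exact ht'ne (hzero_unique t' t (hc t' ht'mem (hball ht'close)) (hc t ht hq0'))
    -- Step 4: q commutes with Λ
    obtain ⟨w, hw⟩ : ∃ w : Fin p → ℝ, Λ = Matrix.diagonal w :=
      ⟨fun i => Λ i i, diagPos_eq_diagonal hΛdp⟩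
    have hwapp : ∀ i, Λ i i = w i := by
      intro i; rw [hw]; exact Matrix.diagonal_apply_eq _ i
    have hqΛ : ∀ t ∈ Icc (0:ℝ) 1, q t * Λ = Λ * q t := by
      intro t ht
      rw [hw]
      ext i j
      rw [Matrix.mul_diagonal, Matrix.diagonal_mul]
      by_cases hsupp : D i i = D j j ∧
          Real.log ((D i i)⁻¹ * Λ i i) = Real.log ((D j j)⁻¹ * Λ j j)
      · have hΛij : Λ i i = Λ j j := by
          have h1 := congrArg Real.exp hsupp.2
          rw [Real.exp_log (mul_pos (inv_pos.mpr (hDdp.2 i)) (hΛdp.2 i)),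
            Real.exp_log (mul_pos (inv_pos.mpr (hDdp.2 j)) (hΛdp.2 j))] at h1
          rw [hsupp.1] at h1
          exact mul_left_cancel₀ (inv_ne_zero (ne_of_gt (hDdp.2 j))) h1
        rw [← hwapp i, ← hwapp j, hΛij]
        ring
      · rw [hQblock i j hsupp t ht]
        ring
    -- Step 5: Pc commutes with U Λ Uᵀ
    have hPU : ∀ t, Pc A A₁ t = U * (q t * Uᵀ) := by
      intro t
      have : U * ((Uᵀ * (Pc A A₁ t * U)) * Uᵀ) = Pc A A₁ t := by
        simp only [Matrix.mul_assoc, hUUt, Matrix.mul_one]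
        rw [← Matrix.mul_assoc U Uᵀ, hUUt, Matrix.one_mul]
      rw [hqdef]
      exact this.symm
    have hPΛ : ∀ t ∈ Icc (0:ℝ) 1,
        Pc A A₁ t * (U * Λ * Uᵀ) = (U * Λ * Uᵀ) * Pc A A₁ t := by
      intro t ht
      rw [hPU t]
      exact conj_comm_transfer hUtU (hqΛ t ht)
    -- Step 6: the linear-algebra core
    set Bm : Mat p := A₁ - A with hBmdef
    have hBanti : IsAntisym Bm := by
      unfold IsAntisym
      rw [hBmdef, Matrix.transpose_sub, hA₁, hA]
      abel
    have hfΛ := fc_commute hPΛ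
    have hfΛ' : ∀ t ∈ Ioo (0:ℝ) 1,
        (NormedSpace.exp (t • (-A)) * Bm * NormedSpace.exp (t • A)) * (U * Λ * Uᵀ)
          = (U * Λ * Uᵀ) * (NormedSpace.exp (t • (-A)) * Bm * NormedSpace.exp (t • A)) := by
      intro t ht
      rw [hBmdef]
      exact hfΛ t ht
    obtain ⟨C, hCanti, hCΛ, hACcomm, hCfip⟩ := linear_core A Bm (U * Λ * Uᵀ) hA hBanti hfΛ'
    -- Step 7: norms
    have e₁ := energy_eq hk hmin₁ hDdp hΛ₁dp hA₁ hexp₁ hA₁min hL₁def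
    have e₂ := energy_eq hk hmin hDdp hΛdp hA hexp hAmin hLdef
    have hfrobL : frobSq L₁ = frobSq L := by rw [hLL]
    have hAA : frobSq A₁ = frobSq A := by
      have h3 : k * frobSq A₁ = k * frobSq A := by linarith
      exact mul_left_cancel₀ (ne_of_gt hk) h3
    by_cases hB0 : Bm = 0
    · -- then the two versions coincide, contradiction with hne
      have hA₁A : A₁ = A := by
        have := sub_eq_zero.mp (hBmdef ▸ hB0)
        exact this
      have hVV : V₁ = V := by
        have h1 : V₁ * Uᵀ = V * Uᵀ := by rw [← hexp₁, ← hexp, hA₁A]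
        have h2 := congrArg (fun M => M * U) h1
        rwa [Matrix.mul_assoc, Matrix.mul_assoc, hUtU, Matrix.mul_one, Matrix.mul_one] at h2
      exact hne (by rw [hVV, hΛΛ])
    · -- main competitor construction
      have hA₁AB : A₁ = A + Bm := by rw [hBmdef]; abel
      have hfipB : fip A Bm = -(frobSq Bm) / 2 := by
        have h := hAA
        rw [hA₁AB, show A + Bm = A + (1:ℝ) • Bm by rw [one_smul], frobSq_add_smul] at h
        norm_num at h
        linarith
      have hfipC : fip A C = -(frobSq Bm) / 2 := by rw [hCfip, hfipB]
      have hBmpos : 0 < frobSq Bm := by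
        rcases (frobSq_nonneg Bm).eq_or_lt with h | h
        · exact absurd (frobSq_eq_zero h.symm) hB0
        · exact h
      have hCpos : 0 < frobSq C := by
        rcases (frobSq_nonneg C).eq_or_lt with h | h
        · exfalso
          have hC0 : C = 0 := frobSq_eq_zero h.symm
          rw [hC0, fip_zero_right] at hfipC
          linarith
        · exact h
      set s : ℝ := frobSq Bm / (2 * frobSq C) with hsdef
      have hs : 0 < s := div_pos hBmpos (by linarith)
      have hsC : s * frobSq C = frobSq Bm / 2 := by
        rw [hsdef]
        field_simp
      set A' : Mat p := A + s • C with hA'def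
      have hA'anti : IsAntisym A' := by
        unfold IsAntisym
        rw [hA'def, Matrix.transpose_add, Matrix.transpose_smul, hA, hCanti, smul_neg]
        abel
      have hlt : frobSq A' < frobSq A := by
        rw [hA'def, frobSq_add_smul, hfipC]
        have : s ^ 2 * frobSq C = s * (frobSq Bm / 2) := by
          rw [sq, mul_assoc, hsC]
        rw [this]
        nlinarith [hs, hBmpos]
      have hcommA_sC : Commute A (s • C) := by
        have h1 : Commute A C := hACcomm
        exact h1.smul_right s
      have hexpA' : NormedSpace.exp A' = NormedSpace.exp A * NormedSpace.exp (s • C) := by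
        rw [hA'def]
        exact Matrix.exp_add_of_commute A (s • C) hcommA_sC
      have hexpnegA' : NormedSpace.exp (-A')
          = NormedSpace.exp (-(s • C)) * NormedSpace.exp (-A) := by
        rw [hA'def, show -(A + s • C) = -(s • C) + -A by abel]
        exact Matrix.exp_add_of_commute _ _ ((hcommA_sC.symm.neg_left).neg_right)
      have hexpsC_comm : NormedSpace.exp (s • C) * (U * Λ * Uᵀ)
          = (U * Λ * Uᵀ) * NormedSpace.exp (s • C) := by
        have h1 : Commute C (U * Λ * Uᵀ) := hCΛ
        exact ((h1.smul_left s).exp_left).eq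
      have hEΛ : NormedSpace.exp A * (U * Λ * Uᵀ) * NormedSpace.exp (-A) = Y := by
        rw [hexp, exp_neg_eq hUtU hVso.1 hexp]
        calc V * Uᵀ * (U * Λ * Uᵀ) * (U * Vᵀ)
            = V * ((Uᵀ * U) * (Λ * ((Uᵀ * U) * Vᵀ))) := by simp only [Matrix.mul_assoc]
          _ = V * Λ * Vᵀ := by
              rw [hUtU]
              simp only [Matrix.one_mul, ← Matrix.mul_assoc]
          _ = Y := hYeq
      have hinner' : NormedSpace.exp A' * (U * Λ * Uᵀ) * NormedSpace.exp (-A') = Y := by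
        rw [hexpA', hexpnegA']
        exact conj_inner hexpsC_comm (exp_mul_exp_neg (s • C)) hEΛ
      have hV'version : (NormedSpace.exp A' * U, Λ) ∈ Versions Y :=
        ⟨isSO_mul (isSO_exp hA'anti) hUso, hΛdp, version_conj hA'anti hinner'⟩
      have hexpA'U : NormedSpace.exp A' = (NormedSpace.exp A' * U) * Uᵀ := by
        rw [Matrix.mul_assoc, hUUt, Matrix.mul_one]
      have hdso_le : dSOsq U (NormedSpace.exp A' * U) ≤ frobSq A' / 2 := by
        apply csInf_le
        · refine ⟨0, ?_⟩
          rintro x ⟨A'', _, _, rfl⟩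
          have := frobSq_nonneg A''
          linarith
        · exact ⟨A', hA'anti, hexpA'U, rfl⟩
      have hdso_nonneg : 0 ≤ dSOsq U (NormedSpace.exp A' * U) := by
        have hmem' : frobSq A' / 2 ∈ {x | ∃ A'' : Mat p, IsAntisym A'' ∧
            NormedSpace.exp A'' = (NormedSpace.exp A' * U) * Uᵀ ∧ x = frobSq A'' / 2} :=
          ⟨A', hA'anti, hexpA'U, rfl⟩
        unfold dSOsq
        apply le_csInf ⟨_, hmem'⟩
        rintro x ⟨A'', _, _, rfl⟩
        have := frobSq_nonneg A''
        linarith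
      have hdD_nonneg : 0 ≤ dDsq D Λ := Finset.sum_nonneg fun i _ => sq_nonneg _
      have hglt : gdist k (U, D) (NormedSpace.exp A' * U, Λ) < dSR k X Y := by
        rw [← hmin]
        unfold gdist
        dsimp only
        rw [dSOsq_eq hA hexp hAmin]
        apply Real.sqrt_lt_sqrt
        · have := mul_nonneg hk.le hdso_nonneg
          linarith
        · have h1 : k * dSOsq U (NormedSpace.exp A' * U) ≤ k * (frobSq A' / 2) :=
            mul_le_mul_of_nonneg_left hdso_le hk.le
          have h2 : k * (frobSq A' / 2) < k * (frobSq A / 2) := by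
            apply mul_lt_mul_of_pos_left _ hk
            linarith
          linarith
      have hdSR_le : dSR k X Y ≤ gdist k (U, D) (NormedSpace.exp A' * U, Λ) := by
        apply csInf_le
        · refine ⟨0, ?_⟩
          rintro x ⟨a, _, b, _, rfl⟩
          exact Real.sqrt_nonneg _
        · exact ⟨(U, D), ⟨hUso, hDdp, hXeq⟩, (NormedSpace.exp A' * U, Λ), hV'version, rfl⟩
      exact absurd (lt_of_le_of_lt hdSR_le hglt) (lt_irrefl _)
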